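/- Let M_{a,b} be a singular ACM with d = gcd(a,b) > 1. If x, y ∈ M_{a,b} with x, y ≠ 1, y divides x in ℤ, and d divides x/y in ℤ, then x/y ∈ M_{a,b}. -/

import Mathlib

/-- Membership in the arithmetical congruence monoid `M_{a,b} = (a + b ℕ₀) ∪ {1}`. -/
def acmMem (a b x : ℕ) : Prop := x = 1 ∨ ∃ k : ℕ, x = a + k * b

/-- `x` is an atom (irreducible) of `M_{a,b}`. -/
def acmAtom (a b x : ℕ) : Prop :=
  acmMem a b x ∧ x ≠ 1 ∧
    ∀ y z : ℕ, acmMem a b y → acmMem a b z → x = y * z → y = 1 ∨ z = 1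

/-- `s` is a factorization of `x` into atoms of `M_{a,b}`. -/
def acmFactorization (a b x : ℕ) (s : Multiset ℕ) : Prop :=
  (∀ u ∈ s, acmAtom a b u) ∧ s.prod = x

/-- The distance between two factorizations. -/
def facDist (s t : Multiset ℕ) : ℕ := max (Multiset.card (s - t)) (Multiset.card (t - s))

/-- There is an `N`-chain of factorizations of `x` from `z₁` to `z₂` in `M_{a,b}`. -/
def acmNChain (a b x N : ℕ) (z₁ z₂ : Multiset ℕ) : Prop :=
  ∃ L : List (Multiset ℕ), L ≠ [] ∧ L.head? = some z₁ ∧ L.getLast? = some z₂ ∧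
    (∀ z ∈ L, acmFactorization a b x z) ∧ L.Chain' (fun s t => facDist s t ≤ N)

/-- The set of `N` such that any two factorizations of any element of `M_{a,b}`
are connected by an `N`-chain; `c(M) = n` iff `n` is the least element of this set. -/
def acmCatSet (a b : ℕ) : Set ℕ :=
  {N | ∀ x, acmMem a b x → ∀ z₁ z₂, acmFactorization a b x z₁ →
      acmFactorization a b x z₂ → acmNChain a b x N z₁ z₂}

/-- Divisibility inside the monoid `M_{a,b}`. -/
def acmDvd (a b x y : ℕ) : Prop := ∃ k, acmMem a b k ∧ x * k = y

/-- `s` is a bullet of `x` in `M_{a,b}`. -/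
def acmBullet (a b x : ℕ) (s : Multiset ℕ) : Prop :=
  (∀ u ∈ s, acmAtom a b u) ∧ acmDvd a b x s.prod ∧
    ∀ t : Multiset ℕ, t ≤ s → t ≠ s → ¬ acmDvd a b x t.prod

/-- Omega primality of `x` in `M_{a,b}`: the sup of the lengths of bullets of `x`. -/
noncomputable def acmOmega (a b x : ℕ) : ℕ∞ :=
  sSup {n : ℕ∞ | ∃ s : Multiset ℕ, acmBullet a b x s ∧ (Multiset.card s : ℕ∞) = n}

/-- The set of factorization lengths of `x` in `M_{a,b}`. -/
def acmLengthSet (a b x : ℕ) : Set ℕ :=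
  {n | ∃ s : Multiset ℕ, acmFactorization a b x s ∧ Multiset.card s = n}

/-- `x` has at least two distinct factorization lengths. -/
def acmLI (a b x : ℕ) : Prop := ∃ m ∈ acmLengthSet a b x, ∃ n ∈ acmLengthSet a b x, m ≠ n

/-- The length density of an element `x` of `M_{a,b}`. -/
noncomputable def acmLD (a b x : ℕ) : ℝ :=
  (((acmLengthSet a b x).ncard : ℝ) - 1) /
    (((sSup (acmLengthSet a b x) : ℕ) : ℝ) - ((sInf (acmLengthSet a b x) : ℕ) : ℝ))



theorem singular_quotient_mem' (a b : ℕ) (ha : 0 < a) (hab : a ≤ b)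
    (hacm : a * a ≡ a [MOD b]) (hsing : 1 < Nat.gcd a b) :
    ∀ x y c : ℕ, (x = 1 ∨ ∃ k : ℕ, x = a + k * b) → (y = 1 ∨ ∃ k : ℕ, y = a + k * b) →
      x ≠ 1 → y ≠ 1 → x = y * c →
      Nat.gcd a b ∣ c → (c = 1 ∨ ∃ k : ℕ, c = a + k * b) := by
  intro x y c hx hy hx1 hy1 hxy hdc
  obtain hx' | ⟨k, hk⟩ := hx; · exact absurd hx' hx1
  obtain hy' | ⟨m, hm⟩ := hy; · exact absurd hy' hy1
  set d := Nat.gcd a b with hd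
  set e := Nat.gcd (a - 1) b with he
  have hda : d ∣ a := Nat.gcd_dvd_left a b
  have hea : e ∣ a - 1 := Nat.gcd_dvd_left _ _
  have heb : e ∣ b := Nat.gcd_dvd_right _ _
  have hcopa : Nat.Coprime a (a - 1) := by
    have : a - 1 + 1 = a := by omega
    rw [← this]; simp
  have hcop : Nat.Coprime d e :=
    Nat.Coprime.coprime_dvd_left hda (Nat.Coprime.coprime_dvd_right hea hcopa)
  -- b ∣ d * e
  have hbaa : b ∣ a * (a - 1) := by
    have h1 : b ∣ a * a - a := (Nat.modEq_iff_dvd' (Nat.le_mul_of_pos_left a ha)).mp hacm.symm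
    have h2 : a * (a - 1) = a * a - a := by
      rw [Nat.mul_sub]; omega
    rwa [h2]
  have hbde : b ∣ d * e := by
    have h1 : Nat.gcd (a * (a - 1)) b = b := Nat.gcd_eq_right hbaa
    have h2 : Nat.gcd (a * (a - 1)) b ∣ Nat.gcd a b * Nat.gcd (a - 1) b := by
      rw [Nat.gcd_comm (a * (a-1)) b, Nat.gcd_comm a b, Nat.gcd_comm (a-1) b]
      exact Nat.gcd_mul_right_dvd_mul_gcd b a (a - 1)
    rwa [h1] at h2
  -- a * c ≡ a [MOD b]
  have hxa : x ≡ a [MOD b] := by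
    rw [hk]
    exact ((Nat.modEq_iff_dvd' (Nat.le_add_right a (k * b))).mpr
      ⟨k, by rw [Nat.add_sub_cancel_left, Nat.mul_comm]⟩).symm
  have hya : y ≡ a [MOD b] := by
    rw [hm]
    exact ((Nat.modEq_iff_dvd' (Nat.le_add_right a (m * b))).mpr
      ⟨m, by rw [Nat.add_sub_cancel_left, Nat.mul_comm]⟩).symm
  have hacb : a * c ≡ a [MOD b] := by
    calc a * c ≡ y * c [MOD b] := (hya.symm).mul_right c
      _ = x := hxy.symm
      _ ≡ a [MOD b] := hxa
  -- c ≡ a [MOD d]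
  have hcd : c ≡ a [MOD d] := ((Nat.modEq_zero_iff_dvd).mpr hdc).trans
    ((Nat.modEq_zero_iff_dvd).mpr hda).symm
  -- c ≡ a [MOD e]
  have ha1e : a ≡ 1 [MOD e] := ((Nat.modEq_iff_dvd' (by omega : 1 ≤ a)).mpr hea).symm
  have hce : c ≡ a [MOD e] := by
    calc c = c * 1 := by ring
      _ ≡ c * a [MOD e] := (ha1e.symm).mul_left c
      _ = a * c := by ring
      _ ≡ a [MOD e] := hacb.of_dvd heb
  have hcb : c ≡ a [MOD b] :=
    ((Nat.modEq_and_modEq_iff_modEq_mul hcop).mp ⟨hcd, hce⟩).of_dvd hbde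
  -- c ≠ 0
  have hc0 : c ≠ 0 := by rintro rfl; simp at hxy; omega
  -- a ≤ c
  have hac : a ≤ c := by
    by_contra h
    push_neg at h
    have hdvd : b ∣ a - c := (Nat.modEq_iff_dvd' (by omega)).mp hcb
    have := Nat.le_of_dvd (by omega) hdvd
    omega
  have hdvd : b ∣ c - a := (Nat.modEq_iff_dvd' hac).mp hcb.symm
  obtain ⟨n, hn⟩ := hdvd
  exact Or.inr ⟨n, by rw [Nat.mul_comm]; omega⟩


/-- In a singular ACM with `d = gcd(a,b) > 1`: if `x, y ∈ M_{a,b}`, `x,y ≠ 1`,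
`y` divides `x` in `ℤ` (say `x = y·c`) and `d ∣ c`, then `c = x/y ∈ M_{a,b}`. -/
theorem singular_quotient_mem (a b : ℕ) (ha : 0 < a) (hab : a ≤ b)
    (hacm : a * a ≡ a [MOD b]) (hsing : 1 < Nat.gcd a b) :
    ∀ x y c : ℕ, acmMem a b x → acmMem a b y → x ≠ 1 → y ≠ 1 → x = y * c →
      Nat.gcd a b ∣ c → acmMem a b c :=
  singular_quotient_mem' a b ha hab hacm hsing
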